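/- arXiv:2312.05419 — 11 statements merged into one kernel-verified Lean document; each statement's English description precedes it below -/
import Mathlib

section
/- Consider an NI system (f, h) with storage function V and an OSNI system (f̂, ĥ) with storage function V̂ and degree of output strictness ε > 0, interconnected in the closed loop where the OSNI controller's output is advanced by one step (SAOSNI controller): û_k = h(x_k) and u_k = ĥ(f̂(x̂_k, h(x_k))). Then along every closed-loop trajectory (x_k, x̂_k), the function W satisfies W(x_{k+1}, x̂_{k+1}) − W(x_k, x̂_k) ≤ −ε ‖ĥ(x̂_{k+1}) − ĥ(x̂_k)‖² ≤ 0 for all k. -/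
open scoped RealInnerProductSpace

/-- Along every closed-loop trajectory of an NI plant and an SAOSNI controller,
the function `W(x,x̂) = V(x) + V̂(x̂) − h(x)ᵀ ĥ(x̂)` satisfies
`W(x_{k+1}, x̂_{k+1}) − W(x_k, x̂_k) ≤ −ε ‖ĥ(x̂_{k+1}) − ĥ(x̂_k)‖² ≤ 0`. -/
theorem NI_SAOSNI_W_decrease
    (n m p : ℕ)
    (f : EuclideanSpace ℝ (Fin n) → EuclideanSpace ℝ (Fin p) → EuclideanSpace ℝ (Fin n))
    (h : EuclideanSpace ℝ (Fin n) → EuclideanSpace ℝ (Fin p))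
    (fh : EuclideanSpace ℝ (Fin m) → EuclideanSpace ℝ (Fin p) → EuclideanSpace ℝ (Fin m))
    (hh : EuclideanSpace ℝ (Fin m) → EuclideanSpace ℝ (Fin p))
    (V : EuclideanSpace ℝ (Fin n) → ℝ)
    (Vh : EuclideanSpace ℝ (Fin m) → ℝ)
    (ε : ℝ) (hε : 0 < ε)
    -- NI: V continuous positive definite plus dissipation inequality
    (hVcont : Continuous V) (hV0 : V 0 = 0) (hVpos : ∀ x : EuclideanSpace ℝ (Fin n), x ≠ 0 → 0 < V x)
    (hNI : ∀ (x : EuclideanSpace ℝ (Fin n)) (u : EuclideanSpace ℝ (Fin p)),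
      V (f x u) - V x ≤ ⟪u, h (f x u) - h x⟫)
    -- OSNI: V̂ continuous positive definite plus strict dissipation inequality
    (hVhcont : Continuous Vh) (hVh0 : Vh 0 = 0)
    (hVhpos : ∀ xh : EuclideanSpace ℝ (Fin m), xh ≠ 0 → 0 < Vh xh)
    (hOSNI : ∀ (xh : EuclideanSpace ℝ (Fin m)) (uh : EuclideanSpace ℝ (Fin p)),
      Vh (fh xh uh) - Vh xh ≤ ⟪uh, hh (fh xh uh) - hh xh⟫ - ε * ‖hh (fh xh uh) - hh xh‖ ^ 2)
    -- closed-loop trajectory: û_k = h(x_k), u_k = ĥ(f̂(x̂_k, h(x_k)))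
    (x : ℕ → EuclideanSpace ℝ (Fin n)) (xh : ℕ → EuclideanSpace ℝ (Fin m))
    (hx : ∀ k, x (k + 1) = f (x k) (hh (fh (xh k) (h (x k)))))
    (hxh : ∀ k, xh (k + 1) = fh (xh k) (h (x k)))
    (W : EuclideanSpace ℝ (Fin n) → EuclideanSpace ℝ (Fin m) → ℝ)
    (hW : ∀ x' xh', W x' xh' = V x' + Vh xh' - ⟪h x', hh xh'⟫) :
    ∀ k, W (x (k + 1)) (xh (k + 1)) - W (x k) (xh k) ≤ -ε * ‖hh (xh (k + 1)) - hh (xh k)‖ ^ 2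
      ∧ -ε * ‖hh (xh (k + 1)) - hh (xh k)‖ ^ 2 ≤ 0 := by
  intro k
  constructor
  · have h1 := hNI (x k) (hh (fh (xh k) (h (x k))))
    have h2 := hOSNI (xh k) (h (x k))
    rw [← hx k] at h1
    rw [← hxh k] at h1 h2
    rw [hW, hW]
    have e1 : ⟪hh (xh (k+1)), h (x (k+1)) - h (x k)⟫
        = ⟪h (x (k+1)), hh (xh (k+1))⟫ - ⟪h (x k), hh (xh (k+1))⟫ := by
      rw [inner_sub_right, real_inner_comm, real_inner_comm (hh (xh (k+1))) (h (x k))]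
    have e2 : ⟪h (x k), hh (xh (k+1)) - hh (xh k)⟫
        = ⟪h (x k), hh (xh (k+1))⟫ - ⟪h (x k), hh (xh k)⟫ := inner_sub_right _ _ _
    rw [e1] at h1
    rw [e2] at h2
    nlinarith [h1, h2]
  · have : 0 ≤ ‖hh (xh (k + 1)) - hh (xh k)‖ ^ 2 := sq_nonneg _
    nlinarith
end

section
/- Consider the closed-loop interconnection of an NI system (f, h, V) and an SAOSNI controller built from an OSNI system (f̂, ĥ, V̂) with degree of output strictness ε > 0, and suppose the function W(x, x̂) = V(x) + V̂(x̂) − h(x)ᵀ ĥ(x̂) is positive definite. Then along every closed-loop trajectory (x_k, x̂_k): (i) the sequence W(x_k, x̂_k) is nonincreasing in k; (ii) for every N, ε ∑_{k=0}^{N−1} ‖ĥ(x̂_{k+1}) − ĥ(x̂_k)‖² ≤ W(x_0, x̂_0); and (iii) ĥ(x̂_{k+1}) − ĥ(x̂_k) → 0 as k → ∞. -/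
open scoped RealInnerProductSpace

/-- For the closed loop of an NI plant and an SAOSNI controller with `W` positive
definite: (i) `k ↦ W(x_k, x̂_k)` is nonincreasing, (ii) the summed output-increment
energy is bounded by `W(x_0, x̂_0)`, and (iii) `ĥ(x̂_{k+1}) − ĥ(x̂_k) → 0`. -/
theorem NI_SAOSNI_W_monotone_sum_tendsto
    (n m p : ℕ)
    (f : EuclideanSpace ℝ (Fin n) → EuclideanSpace ℝ (Fin p) → EuclideanSpace ℝ (Fin n))
    (h : EuclideanSpace ℝ (Fin n) → EuclideanSpace ℝ (Fin p))
    (fh : EuclideanSpace ℝ (Fin m) → EuclideanSpace ℝ (Fin p) → EuclideanSpace ℝ (Fin m))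
    (hh : EuclideanSpace ℝ (Fin m) → EuclideanSpace ℝ (Fin p))
    (V : EuclideanSpace ℝ (Fin n) → ℝ)
    (Vh : EuclideanSpace ℝ (Fin m) → ℝ)
    (ε : ℝ) (hε : 0 < ε)
    -- NI: V continuous positive definite plus dissipation inequality
    (hVcont : Continuous V) (hV0 : V 0 = 0) (hVpos : ∀ x : EuclideanSpace ℝ (Fin n), x ≠ 0 → 0 < V x)
    (hNI : ∀ (x : EuclideanSpace ℝ (Fin n)) (u : EuclideanSpace ℝ (Fin p)),
      V (f x u) - V x ≤ ⟪u, h (f x u) - h x⟫)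
    -- OSNI: V̂ continuous positive definite plus strict dissipation inequality
    (hVhcont : Continuous Vh) (hVh0 : Vh 0 = 0)
    (hVhpos : ∀ xh : EuclideanSpace ℝ (Fin m), xh ≠ 0 → 0 < Vh xh)
    (hOSNI : ∀ (xh : EuclideanSpace ℝ (Fin m)) (uh : EuclideanSpace ℝ (Fin p)),
      Vh (fh xh uh) - Vh xh ≤ ⟪uh, hh (fh xh uh) - hh xh⟫ - ε * ‖hh (fh xh uh) - hh xh‖ ^ 2)
    -- W and its positive definiteness
    (W : EuclideanSpace ℝ (Fin n) → EuclideanSpace ℝ (Fin m) → ℝ)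
    (hW : ∀ x' xh', W x' xh' = V x' + Vh xh' - ⟪h x', hh xh'⟫)
    (hW0 : W 0 0 = 0)
    (hWpos : ∀ (x' : EuclideanSpace ℝ (Fin n)) (xh' : EuclideanSpace ℝ (Fin m)),
      ¬(x' = 0 ∧ xh' = 0) → 0 < W x' xh')
    -- closed-loop trajectory: û_k = h(x_k), u_k = ĥ(f̂(x̂_k, h(x_k)))
    (x : ℕ → EuclideanSpace ℝ (Fin n)) (xh : ℕ → EuclideanSpace ℝ (Fin m))
    (hx : ∀ k, x (k + 1) = f (x k) (hh (fh (xh k) (h (x k)))))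
    (hxh : ∀ k, xh (k + 1) = fh (xh k) (h (x k))) :
    (∀ k, W (x (k + 1)) (xh (k + 1)) ≤ W (x k) (xh k))
    ∧ (∀ N : ℕ, ε * ∑ k ∈ Finset.range N, ‖hh (xh (k + 1)) - hh (xh k)‖ ^ 2 ≤ W (x 0) (xh 0))
    ∧ Filter.Tendsto (fun k => hh (xh (k + 1)) - hh (xh k)) Filter.atTop (nhds 0) := by

  -- key dissipation step
  have key : ∀ k, W (x (k + 1)) (xh (k + 1)) + ε * ‖hh (xh (k + 1)) - hh (xh k)‖ ^ 2
      ≤ W (x k) (xh k) := by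
    intro k
    have h1 := hNI (x k) (hh (fh (xh k) (h (x k))))
    have h2 := hOSNI (xh k) (h (x k))
    rw [hW, hW, hx k, hxh k]
    simp only [inner_sub_right] at h1 h2 ⊢
    have c1 := real_inner_comm (h (x k)) (hh (fh (xh k) (h (x k))))
    have c2 := real_inner_comm (h (f (x k) (hh (fh (xh k) (h (x k))))))
      (hh (fh (xh k) (h (x k))))
    linarith
  have Wnn : ∀ x' xh', 0 ≤ W x' xh' := by
    intro x' xh'
    by_cases hc : x' = 0 ∧ xh' = 0
    · rw [hc.1, hc.2, hW0]
    · exact (hWpos x' xh' hc).le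
  have sqnn : ∀ k, (0:ℝ) ≤ ‖hh (xh (k + 1)) - hh (xh k)‖ ^ 2 := fun k => sq_nonneg _
  have mono : ∀ k, W (x (k + 1)) (xh (k + 1)) ≤ W (x k) (xh k) := by
    intro k
    have := key k
    nlinarith [sqnn k, mul_nonneg hε.le (sqnn k)]
  have hsum : ∀ N : ℕ, ε * ∑ k ∈ Finset.range N, ‖hh (xh (k + 1)) - hh (xh k)‖ ^ 2
      ≤ W (x 0) (xh 0) := by
    intro N
    have : ε * ∑ k ∈ Finset.range N, ‖hh (xh (k + 1)) - hh (xh k)‖ ^ 2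
        ≤ W (x 0) (xh 0) - W (x N) (xh N) := by
      induction N with
      | zero => simp
      | succ N ih =>
        rw [Finset.sum_range_succ, mul_add]
        have := key N
        linarith
    linarith [Wnn (x N) (xh N)]
  refine ⟨mono, hsum, ?_⟩
  have hsummable : Summable (fun k => ‖hh (xh (k + 1)) - hh (xh k)‖ ^ 2) := by
    apply summable_of_sum_range_le sqnn
    intro N
    have := hsum N
    exact (le_div_iff₀' hε).mpr this
  have h0 : Filter.Tendsto (fun k => ‖hh (xh (k + 1)) - hh (xh k)‖ ^ 2)
      Filter.atTop (nhds 0) := hsummable.tendsto_atTop_zero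
  rw [tendsto_zero_iff_norm_tendsto_zero]
  have := (continuous_id.pow 2).continuousAt (x := (0:ℝ))
  have hn : Filter.Tendsto (fun k => ‖hh (xh (k + 1)) - hh (xh k)‖) Filter.atTop (nhds 0) := by
    have := h0.sqrt
    simpa [Real.sqrt_sq (norm_nonneg _)] using this
  exact hn
end

section
/- (Theorem 1) Let f, h, f̂, ĥ be continuous, let (f, h) be NI with storage function V, let (f̂, ĥ) be OSNI with storage function V̂ and degree of output strictness ε > 0, and suppose W(x, x̂) = V(x) + V̂(x̂) − h(x)ᵀ ĥ(x̂) is continuous and positive definite. Assume further (Assumption 1, closed-loop form) that every sequence (z_k, ẑ_k)_{k∈ℕ} satisfying the closed-loop dynamics and ĥ(ẑ_{k+1}) = ĥ(ẑ_k) for all k ∈ ℕ satisfies z_k = 0 and ẑ_k = 0 for all sufficiently large k. Then every bounded closed-loop trajectory (x_k, x̂_k) converges to the origin: x_k → 0 and x̂_k → 0 as k → ∞. -/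
open scoped RealInnerProductSpace

set_option maxHeartbeats 2000000 in
/-- Theorem 1: every bounded closed-loop trajectory of an NI plant with an SAOSNI
controller converges to the origin, under positive definiteness of `W` and the
closed-loop form of Assumption 1. -/
theorem NI_SAOSNI_asymptotic_stability
    (n m p : ℕ)
    (f : EuclideanSpace ℝ (Fin n) → EuclideanSpace ℝ (Fin p) → EuclideanSpace ℝ (Fin n))
    (h : EuclideanSpace ℝ (Fin n) → EuclideanSpace ℝ (Fin p))
    (fh : EuclideanSpace ℝ (Fin m) → EuclideanSpace ℝ (Fin p) → EuclideanSpace ℝ (Fin m))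
    (hh : EuclideanSpace ℝ (Fin m) → EuclideanSpace ℝ (Fin p))
    (hfcont : Continuous fun q : EuclideanSpace ℝ (Fin n) × EuclideanSpace ℝ (Fin p) => f q.1 q.2)
    (hhcont : Continuous h)
    (hfhcont : Continuous fun q : EuclideanSpace ℝ (Fin m) × EuclideanSpace ℝ (Fin p) => fh q.1 q.2)
    (hhhcont : Continuous hh)
    (V : EuclideanSpace ℝ (Fin n) → ℝ)
    (Vh : EuclideanSpace ℝ (Fin m) → ℝ)
    (ε : ℝ) (hε : 0 < ε)
    -- NI: V continuous positive definite plus dissipation inequality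
    (hVcont : Continuous V) (hV0 : V 0 = 0) (hVpos : ∀ x : EuclideanSpace ℝ (Fin n), x ≠ 0 → 0 < V x)
    (hNI : ∀ (x : EuclideanSpace ℝ (Fin n)) (u : EuclideanSpace ℝ (Fin p)),
      V (f x u) - V x ≤ ⟪u, h (f x u) - h x⟫)
    -- OSNI: V̂ continuous positive definite plus strict dissipation inequality
    (hVhcont : Continuous Vh) (hVh0 : Vh 0 = 0)
    (hVhpos : ∀ xh : EuclideanSpace ℝ (Fin m), xh ≠ 0 → 0 < Vh xh)
    (hOSNI : ∀ (xh : EuclideanSpace ℝ (Fin m)) (uh : EuclideanSpace ℝ (Fin p)),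
      Vh (fh xh uh) - Vh xh ≤ ⟪uh, hh (fh xh uh) - hh xh⟫ - ε * ‖hh (fh xh uh) - hh xh‖ ^ 2)
    -- W continuous and positive definite
    (W : EuclideanSpace ℝ (Fin n) → EuclideanSpace ℝ (Fin m) → ℝ)
    (hW : ∀ x' xh', W x' xh' = V x' + Vh xh' - ⟪h x', hh xh'⟫)
    (hWcont : Continuous fun q : EuclideanSpace ℝ (Fin n) × EuclideanSpace ℝ (Fin m) => W q.1 q.2)
    (hW0 : W 0 0 = 0)
    (hWpos : ∀ (x' : EuclideanSpace ℝ (Fin n)) (xh' : EuclideanSpace ℝ (Fin m)),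
      ¬(x' = 0 ∧ xh' = 0) → 0 < W x' xh')
    -- Assumption 1 (closed-loop form): output-stationary closed-loop sequences vanish eventually
    (hAss : ∀ (z : ℕ → EuclideanSpace ℝ (Fin n)) (zh : ℕ → EuclideanSpace ℝ (Fin m)),
      (∀ k, z (k + 1) = f (z k) (hh (fh (zh k) (h (z k))))) →
      (∀ k, zh (k + 1) = fh (zh k) (h (z k))) →
      (∀ k, hh (zh (k + 1)) = hh (zh k)) →
      ∃ K : ℕ, ∀ k ≥ K, z k = 0 ∧ zh k = 0)
    -- a bounded closed-loop trajectory
    (x : ℕ → EuclideanSpace ℝ (Fin n)) (xh : ℕ → EuclideanSpace ℝ (Fin m))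
    (hx : ∀ k, x (k + 1) = f (x k) (hh (fh (xh k) (h (x k)))))
    (hxh : ∀ k, xh (k + 1) = fh (xh k) (h (x k)))
    (hbdd : ∃ R : ℝ, ∀ k, ‖x k‖ ≤ R ∧ ‖xh k‖ ≤ R) :
    Filter.Tendsto x Filter.atTop (nhds 0) ∧ Filter.Tendsto xh Filter.atTop (nhds 0) := by
  classical
  obtain ⟨R, hR⟩ := hbdd
  -- the closed-loop step map
  set Φ : EuclideanSpace ℝ (Fin n) × EuclideanSpace ℝ (Fin m) →
      EuclideanSpace ℝ (Fin n) × EuclideanSpace ℝ (Fin m) :=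
    fun q => (f q.1 (hh (fh q.2 (h q.1))), fh q.2 (h q.1)) with hΦdef
  have hc2 : Continuous fun q : EuclideanSpace ℝ (Fin n) × EuclideanSpace ℝ (Fin m) =>
      fh q.2 (h q.1) := by
    exact hfhcont.comp (continuous_snd.prodMk (hhcont.comp continuous_fst))
  have hΦc : Continuous Φ := by
    refine Continuous.prodMk ?_ hc2
    exact hfcont.comp (continuous_fst.prodMk (hhhcont.comp hc2))
  -- W as a function on the product space
  set Wp : EuclideanSpace ℝ (Fin n) × EuclideanSpace ℝ (Fin m) → ℝ :=
    fun q => W q.1 q.2 with hWpdef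
  have hWpc : Continuous Wp := hWcont
  -- W is nonnegative
  have hWnn : ∀ q : EuclideanSpace ℝ (Fin n) × EuclideanSpace ℝ (Fin m), 0 ≤ Wp q := by
    intro q
    by_cases hq : q.1 = 0 ∧ q.2 = 0
    · simp only [hWpdef, hq.1, hq.2, hW0]
      exact le_rfl
    · exact le_of_lt (hWpos q.1 q.2 hq)
  -- key dissipation step
  have step : ∀ (a : EuclideanSpace ℝ (Fin n)) (b : EuclideanSpace ℝ (Fin m)),
      Wp (Φ (a, b)) - Wp (a, b) ≤ -(ε * ‖hh (fh b (h a)) - hh b‖ ^ 2) := by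
    intro a b
    have h1 := hNI a (hh (fh b (h a)))
    have h2 := hOSNI b (h a)
    simp only [hWpdef, hΦdef, hW]
    rw [inner_sub_right] at h1 h2
    have e1 : ⟪hh (fh b (h a)), h (f a (hh (fh b (h a))))⟫ =
        ⟪h (f a (hh (fh b (h a)))), hh (fh b (h a))⟫ := real_inner_comm _ _
    have e2 : ⟪hh (fh b (h a)), h a⟫ = ⟪h a, hh (fh b (h a))⟫ := real_inner_comm _ _
    linarith [h1, h2, e1, e2]
  -- the closed-loop trajectory as a point in the product space
  set P : ℕ → EuclideanSpace ℝ (Fin n) × EuclideanSpace ℝ (Fin m) :=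
    fun k => (x k, xh k) with hPdef
  have hPstep : ∀ k, P (k + 1) = Φ (P k) := by
    intro k
    simp only [hPdef, hΦdef]
    rw [hx k, hxh k]
  have hPiter : ∀ k i, P (k + i) = Φ^[i] (P k) := by
    intro k i
    induction i with
    | zero => simp
    | succ i ih =>
      rw [Function.iterate_succ_apply', ← ih, ← hPstep (k + i)]
      rfl
  -- W along the trajectory is antitone and bounded below
  have hanti : Antitone fun k => Wp (P k) := by
    apply antitone_nat_of_succ_le
    intro k
    have hst := step (x k) (xh k)
    have hub : -(ε * ‖hh (fh (xh k) (h (x k))) - hh (xh k)‖ ^ 2) ≤ 0 :=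
      neg_nonpos.mpr (by positivity)
    have h1 : Wp (Φ (x k, xh k)) - Wp (x k, xh k) ≤ 0 := le_trans hst hub
    have h2 : P (k + 1) = Φ (x k, xh k) := hPstep k
    rw [h2]
    simpa [hPdef] using by linarith
  have hbb : BddBelow (Set.range fun k => Wp (P k)) := by
    refine ⟨0, ?_⟩
    rintro r ⟨k, rfl⟩
    exact hWnn _
  set L : ℝ := ⨅ k, Wp (P k) with hLdef
  have hWL : Filter.Tendsto (fun k => Wp (P k)) Filter.atTop (nhds L) :=
    tendsto_atTop_ciInf hanti hbb
  -- boundedness: P lives in a compact closed ball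
  have hPmem : ∀ k, P k ∈ Metric.closedBall
      (0 : EuclideanSpace ℝ (Fin n) × EuclideanSpace ℝ (Fin m)) R := by
    intro k
    rw [Metric.mem_closedBall, dist_zero_right, Prod.norm_def]
    exact max_le (hR k).1 (hR k).2
  have hcomp : IsCompact (Metric.closedBall
      (0 : EuclideanSpace ℝ (Fin n) × EuclideanSpace ℝ (Fin m)) R) :=
    isCompact_closedBall _ _
  -- extract a convergent subsequence
  obtain ⟨q, -, φ, hφ, hqlim⟩ := hcomp.tendsto_subseq hPmem
  -- the limit trajectory
  set z : ℕ → EuclideanSpace ℝ (Fin n) := fun i => (Φ^[i] q).1 with hzdef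
  set zh : ℕ → EuclideanSpace ℝ (Fin m) := fun i => (Φ^[i] q).2 with hzhdef
  have hzΦ : ∀ i, Φ^[i + 1] q = Φ (Φ^[i] q) := fun i => Function.iterate_succ_apply' Φ i q
  -- W is constant (= L) along the limit trajectory
  have hWconst : ∀ i, Wp (Φ^[i] q) = L := by
    intro i
    have h1 : Filter.Tendsto (fun j => P (φ j + i)) Filter.atTop (nhds (Φ^[i] q)) := by
      have he : (fun j => P (φ j + i)) = fun j => Φ^[i] (P (φ j)) := by
        funext j; exact hPiter (φ j) i
      rw [he]
      exact ((hΦc.iterate i).continuousAt).tendsto.comp hqlim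
    have h2 : Filter.Tendsto (fun j => Wp (P (φ j + i))) Filter.atTop (nhds (Wp (Φ^[i] q))) :=
      (hWpc.continuousAt).tendsto.comp h1
    have h3 : Filter.Tendsto (fun j => Wp (P (φ j + i))) Filter.atTop (nhds L) := by
      have ht : Filter.Tendsto (fun j => φ j + i) Filter.atTop Filter.atTop :=
        Filter.tendsto_atTop_mono (fun j => Nat.le_add_right (φ j) i) hφ.tendsto_atTop
      exact hWL.comp ht
    exact tendsto_nhds_unique h2 h3
  -- outputs are stationary along the limit trajectory
  have hzh1 : ∀ i, zh (i + 1) = fh (zh i) (h (z i)) := by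
    intro i; simp only [hzhdef, hzΦ i]; rfl
  have hstat : ∀ i, hh (zh (i + 1)) = hh (zh i) := by
    intro i
    have hs := step (z i) (zh i)
    have hWeq : Wp (Φ (z i, zh i)) = Wp (Φ^[i + 1] q) := by rw [hzΦ i]
    have hWzi : Wp (z i, zh i) = Wp (Φ^[i] q) := rfl
    rw [hWeq, hWconst (i + 1), hWzi, hWconst i] at hs
    have hnn : 0 ≤ ε * ‖hh (fh (zh i) (h (z i))) - hh (zh i)‖ ^ 2 := by positivity
    have hz0 : ‖hh (fh (zh i) (h (z i))) - hh (zh i)‖ ^ 2 = 0 := by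
      nlinarith
    have hdz : hh (fh (zh i) (h (z i))) - hh (zh i) = 0 :=
      norm_eq_zero.mp (pow_eq_zero_iff (n := 2) (by norm_num) |>.mp hz0)
    rw [hzh1 i]
    exact sub_eq_zero.mp hdz
  -- the limit trajectory satisfies the closed-loop dynamics
  have hzrec : ∀ i, z (i + 1) = f (z i) (hh (fh (zh i) (h (z i)))) := by
    intro i; simp only [hzdef, hzhdef, hzΦ i]; rfl
  -- Assumption 1 forces the limit trajectory to vanish, hence L = 0
  obtain ⟨K, hK⟩ := hAss z zh hzrec hzh1 hstat
  have hL0 : L = 0 := by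
    have hzK := hK K le_rfl
    have hWK : Wp (Φ^[K] q) = W (z K) (zh K) := rfl
    have := hWconst K
    rw [hWK, hzK.1, hzK.2, hW0] at this
    exact this.symm
  rw [hL0] at hWL
  -- conclude convergence of the trajectory to the origin
  have hP0 : Filter.Tendsto P Filter.atTop
      (nhds (0 : EuclideanSpace ℝ (Fin n) × EuclideanSpace ℝ (Fin m))) := by
    apply Filter.tendsto_of_subseq_tendsto
    intro ns hns
    obtain ⟨a, -, ms, hms, halim⟩ := hcomp.tendsto_subseq (fun j => hPmem (ns j))
    have hWa : Wp a = 0 := by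
      have h2 : Filter.Tendsto (fun j => Wp (P (ns (ms j)))) Filter.atTop (nhds (Wp a)) :=
        (hWpc.continuousAt).tendsto.comp halim
      have h3 : Filter.Tendsto (fun j => Wp (P (ns (ms j)))) Filter.atTop (nhds 0) :=
        hWL.comp (hns.comp hms.tendsto_atTop)
      exact tendsto_nhds_unique h2 h3
    have ha0 : a = 0 := by
      by_contra hne
      have hna : ¬(a.1 = 0 ∧ a.2 = 0) := by
        rintro ⟨ha1, ha2⟩
        exact hne (Prod.ext ha1 ha2)
      have := hWpos a.1 a.2 hna
      simp only [hWpdef] at hWa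
      linarith
    exact ⟨ms, ha0 ▸ halim⟩
  constructor
  · have hfst := (continuous_fst.tendsto
      (0 : EuclideanSpace ℝ (Fin n) × EuclideanSpace ℝ (Fin m))).comp hP0
    simpa [hPdef, Function.comp_def] using hfst
  · have hsnd := (continuous_snd.tendsto
      (0 : EuclideanSpace ℝ (Fin n) × EuclideanSpace ℝ (Fin m))).comp hP0
    simpa [hPdef, Function.comp_def] using hsnd
end

section
/- Consider an NI system (f, h) with storage function V used as a step-advanced NI (SANI) controller, interconnected with an OSNI system (f̂, ĥ) with storage function V̂ and degree of output strictness ε > 0, via u_k = ĥ(x̂_k) and û_k = h(x_{k+1}) = h(f(x_k, ĥ(x̂_k))). Then along every closed-loop trajectory (x_k, x̂_k), the function W satisfies W(x_{k+1}, x̂_{k+1}) − W(x_k, x̂_k) ≤ −ε ‖ĥ(x̂_{k+1}) − ĥ(x̂_k)‖² ≤ 0 for all k. -/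
open scoped RealInnerProductSpace

/-- Along every closed-loop trajectory of an SANI controller (an NI system with a
one-step output advance) and an OSNI plant, the function
`W(x,x̂) = V(x) + V̂(x̂) − h(x)ᵀ ĥ(x̂)` satisfies
`W(x_{k+1}, x̂_{k+1}) − W(x_k, x̂_k) ≤ −ε ‖ĥ(x̂_{k+1}) − ĥ(x̂_k)‖² ≤ 0`. -/
theorem SANI_OSNI_W_decrease
    (n m p : ℕ)
    (f : EuclideanSpace ℝ (Fin n) → EuclideanSpace ℝ (Fin p) → EuclideanSpace ℝ (Fin n))
    (h : EuclideanSpace ℝ (Fin n) → EuclideanSpace ℝ (Fin p))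
    (fh : EuclideanSpace ℝ (Fin m) → EuclideanSpace ℝ (Fin p) → EuclideanSpace ℝ (Fin m))
    (hh : EuclideanSpace ℝ (Fin m) → EuclideanSpace ℝ (Fin p))
    (V : EuclideanSpace ℝ (Fin n) → ℝ)
    (Vh : EuclideanSpace ℝ (Fin m) → ℝ)
    (ε : ℝ) (hε : 0 < ε)
    -- NI: V continuous positive definite plus dissipation inequality
    (hVcont : Continuous V) (hV0 : V 0 = 0) (hVpos : ∀ x : EuclideanSpace ℝ (Fin n), x ≠ 0 → 0 < V x)
    (hNI : ∀ (x : EuclideanSpace ℝ (Fin n)) (u : EuclideanSpace ℝ (Fin p)),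
      V (f x u) - V x ≤ ⟪u, h (f x u) - h x⟫)
    -- OSNI: V̂ continuous positive definite plus strict dissipation inequality
    (hVhcont : Continuous Vh) (hVh0 : Vh 0 = 0)
    (hVhpos : ∀ xh : EuclideanSpace ℝ (Fin m), xh ≠ 0 → 0 < Vh xh)
    (hOSNI : ∀ (xh : EuclideanSpace ℝ (Fin m)) (uh : EuclideanSpace ℝ (Fin p)),
      Vh (fh xh uh) - Vh xh ≤ ⟪uh, hh (fh xh uh) - hh xh⟫ - ε * ‖hh (fh xh uh) - hh xh‖ ^ 2)
    -- closed-loop trajectory: u_k = ĥ(x̂_k), û_k = h(x_{k+1}) = h(f(x_k, ĥ(x̂_k)))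
    (x : ℕ → EuclideanSpace ℝ (Fin n)) (xh : ℕ → EuclideanSpace ℝ (Fin m))
    (hx : ∀ k, x (k + 1) = f (x k) (hh (xh k)))
    (hxh : ∀ k, xh (k + 1) = fh (xh k) (h (f (x k) (hh (xh k)))))
    (W : EuclideanSpace ℝ (Fin n) → EuclideanSpace ℝ (Fin m) → ℝ)
    (hW : ∀ x' xh', W x' xh' = V x' + Vh xh' - ⟪h x', hh xh'⟫) :
    ∀ k, W (x (k + 1)) (xh (k + 1)) - W (x k) (xh k) ≤ -ε * ‖hh (xh (k + 1)) - hh (xh k)‖ ^ 2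
      ∧ -ε * ‖hh (xh (k + 1)) - hh (xh k)‖ ^ 2 ≤ 0 := by
  intro k
  have h1 := hNI (x k) (hh (xh k))
  have h2 := hOSNI (xh k) (h (f (x k) (hh (xh k))))
  have hx1 : x (k + 1) = f (x k) (hh (xh k)) := hx k
  have hxh1 : xh (k + 1) = fh (xh k) (h (f (x k) (hh (xh k)))) := hxh k
  rw [← hx1] at h1 h2 hxh1
  rw [← hxh1] at h2
  constructor
  · rw [hW, hW]
    have e1 : (⟪hh (xh k), h (x (k+1)) - h (x k)⟫ : ℝ)
        = ⟪hh (xh k), h (x (k+1))⟫ - ⟪hh (xh k), h (x k)⟫ := inner_sub_right _ _ _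
    have e2 : (⟪h (x (k+1)), hh (xh (k+1)) - hh (xh k)⟫ : ℝ)
        = ⟪h (x (k+1)), hh (xh (k+1))⟫ - ⟪h (x (k+1)), hh (xh k)⟫ := inner_sub_right _ _ _
    have e3 : (⟪hh (xh k), h (x (k+1))⟫ : ℝ) = ⟪h (x (k+1)), hh (xh k)⟫ := real_inner_comm _ _
    have e4 : (⟪hh (xh k), h (x k)⟫ : ℝ) = ⟪h (x k), hh (xh k)⟫ := real_inner_comm _ _
    rw [e1, e3, e4] at h1
    rw [e2] at h2
    nlinarith [h1, h2]
  · have := sq_nonneg ‖hh (xh (k+1)) - hh (xh k)‖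
    nlinarith
end

section
/- (Theorem 2) Let f, h, f̂, ĥ be continuous, let (f, h) be NI with storage function V (used as an SANI controller), let (f̂, ĥ) be OSNI with storage function V̂ and degree of output strictness ε > 0, and suppose W(x, x̂) = V(x) + V̂(x̂) − h(x)ᵀ ĥ(x̂) is continuous and positive definite. Assume further (Assumption 2, closed-loop form) that every sequence (z_k, ẑ_k)_{k∈ℕ} satisfying the closed-loop dynamics and ĥ(ẑ_{k+1}) = ĥ(ẑ_k) for all k ∈ ℕ satisfies z_k = 0 and ẑ_k = 0 for all sufficiently large k. Then every bounded closed-loop trajectory (x_k, x̂_k) converges to the origin: x_k → 0 and x̂_k → 0 as k → ∞. -/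
open scoped RealInnerProductSpace

/-- Theorem 2: every bounded closed-loop trajectory of an SANI controller with an OSNI
plant converges to the origin, under positive definiteness of `W` and the
closed-loop form of Assumption 2. -/
theorem SANI_OSNI_asymptotic_stability
    (n m p : ℕ)
    (f : EuclideanSpace ℝ (Fin n) → EuclideanSpace ℝ (Fin p) → EuclideanSpace ℝ (Fin n))
    (h : EuclideanSpace ℝ (Fin n) → EuclideanSpace ℝ (Fin p))
    (fh : EuclideanSpace ℝ (Fin m) → EuclideanSpace ℝ (Fin p) → EuclideanSpace ℝ (Fin m))
    (hh : EuclideanSpace ℝ (Fin m) → EuclideanSpace ℝ (Fin p))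
    (hfcont : Continuous fun q : EuclideanSpace ℝ (Fin n) × EuclideanSpace ℝ (Fin p) => f q.1 q.2)
    (hhcont : Continuous h)
    (hfhcont : Continuous fun q : EuclideanSpace ℝ (Fin m) × EuclideanSpace ℝ (Fin p) => fh q.1 q.2)
    (hhhcont : Continuous hh)
    (V : EuclideanSpace ℝ (Fin n) → ℝ)
    (Vh : EuclideanSpace ℝ (Fin m) → ℝ)
    (ε : ℝ) (hε : 0 < ε)
    -- NI: V continuous positive definite plus dissipation inequality
    (hVcont : Continuous V) (hV0 : V 0 = 0) (hVpos : ∀ x : EuclideanSpace ℝ (Fin n), x ≠ 0 → 0 < V x)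
    (hNI : ∀ (x : EuclideanSpace ℝ (Fin n)) (u : EuclideanSpace ℝ (Fin p)),
      V (f x u) - V x ≤ ⟪u, h (f x u) - h x⟫)
    -- OSNI: V̂ continuous positive definite plus strict dissipation inequality
    (hVhcont : Continuous Vh) (hVh0 : Vh 0 = 0)
    (hVhpos : ∀ xh : EuclideanSpace ℝ (Fin m), xh ≠ 0 → 0 < Vh xh)
    (hOSNI : ∀ (xh : EuclideanSpace ℝ (Fin m)) (uh : EuclideanSpace ℝ (Fin p)),
      Vh (fh xh uh) - Vh xh ≤ ⟪uh, hh (fh xh uh) - hh xh⟫ - ε * ‖hh (fh xh uh) - hh xh‖ ^ 2)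
    -- W continuous and positive definite
    (W : EuclideanSpace ℝ (Fin n) → EuclideanSpace ℝ (Fin m) → ℝ)
    (hW : ∀ x' xh', W x' xh' = V x' + Vh xh' - ⟪h x', hh xh'⟫)
    (hWcont : Continuous fun q : EuclideanSpace ℝ (Fin n) × EuclideanSpace ℝ (Fin m) => W q.1 q.2)
    (hW0 : W 0 0 = 0)
    (hWpos : ∀ (x' : EuclideanSpace ℝ (Fin n)) (xh' : EuclideanSpace ℝ (Fin m)),
      ¬(x' = 0 ∧ xh' = 0) → 0 < W x' xh')
    -- Assumption 1 (closed-loop form): output-stationary closed-loop sequences vanish eventually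
    (hAss : ∀ (z : ℕ → EuclideanSpace ℝ (Fin n)) (zh : ℕ → EuclideanSpace ℝ (Fin m)),
      (∀ k, z (k + 1) = f (z k) (hh (zh k))) →
      (∀ k, zh (k + 1) = fh (zh k) (h (f (z k) (hh (zh k))))) →
      (∀ k, hh (zh (k + 1)) = hh (zh k)) →
      ∃ K : ℕ, ∀ k ≥ K, z k = 0 ∧ zh k = 0)
    -- a bounded closed-loop trajectory
    (x : ℕ → EuclideanSpace ℝ (Fin n)) (xh : ℕ → EuclideanSpace ℝ (Fin m))
    (hx : ∀ k, x (k + 1) = f (x k) (hh (xh k)))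
    (hxh : ∀ k, xh (k + 1) = fh (xh k) (h (f (x k) (hh (xh k)))))
    (hbdd : ∃ R : ℝ, ∀ k, ‖x k‖ ≤ R ∧ ‖xh k‖ ≤ R) :
    Filter.Tendsto x Filter.atTop (nhds 0) ∧ Filter.Tendsto xh Filter.atTop (nhds 0) := by
  classical
  obtain ⟨R, hR⟩ := hbdd
  -- closed-loop map and trajectory
  set F : (EuclideanSpace ℝ (Fin n) × EuclideanSpace ℝ (Fin m)) →
      (EuclideanSpace ℝ (Fin n) × EuclideanSpace ℝ (Fin m)) :=
    fun q => (f q.1 (hh q.2), fh q.2 (h (f q.1 (hh q.2)))) with hFdef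
  set s : ℕ → (EuclideanSpace ℝ (Fin n) × EuclideanSpace ℝ (Fin m)) :=
    fun k => (x k, xh k) with hsdef
  have hFcont : Continuous F := by
    have h1 : Continuous fun q : EuclideanSpace ℝ (Fin n) × EuclideanSpace ℝ (Fin m) =>
        f q.1 (hh q.2) := hfcont.comp (continuous_fst.prodMk (hhhcont.comp continuous_snd))
    exact (h1.prodMk (hfhcont.comp (continuous_snd.prodMk (hhcont.comp h1))))
  have hsF : ∀ k, s (k + 1) = F (s k) := by
    intro k
    exact Prod.ext (hx k) (hxh k)
  -- key dissipation step
  have hstep : ∀ k, W (x (k + 1)) (xh (k + 1)) + ε * ‖hh (xh (k + 1)) - hh (xh k)‖ ^ 2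
      ≤ W (x k) (xh k) := by
    intro k
    have h1 := hNI (x k) (hh (xh k))
    rw [← hx k] at h1
    have hfhx : fh (xh k) (h (x (k + 1))) = xh (k + 1) := by rw [hxh k, hx k]
    have h2 := hOSNI (xh k) (h (x (k + 1)))
    rw [hfhx] at h2
    rw [hW (x (k + 1)) (xh (k + 1)), hW (x k) (xh k)]
    have e1 : ⟪hh (xh k), h (x (k + 1)) - h (x k)⟫
        = ⟪h (x (k + 1)), hh (xh k)⟫ - ⟪h (x k), hh (xh k)⟫ := by
      rw [inner_sub_right, real_inner_comm (hh (xh k)) (h (x (k + 1))),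
        real_inner_comm (hh (xh k)) (h (x k))]
    have e2 : ⟪h (x (k + 1)), hh (xh (k + 1)) - hh (xh k)⟫
        = ⟪h (x (k + 1)), hh (xh (k + 1))⟫ - ⟪h (x (k + 1)), hh (xh k)⟫ :=
      inner_sub_right _ _ _
    rw [e1] at h1
    rw [e2] at h2
    linarith
  have hanti : Antitone fun k => W (x k) (xh k) := by
    refine antitone_nat_of_succ_le fun k => ?_
    have := hstep k
    nlinarith [sq_nonneg ‖hh (xh (k + 1)) - hh (xh k)‖, mul_nonneg hε.le
      (sq_nonneg ‖hh (xh (k + 1)) - hh (xh k)‖)]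
  have hWnonneg : ∀ x' xh', 0 ≤ W x' xh' := by
    intro x' xh'
    by_cases hq : x' = 0 ∧ xh' = 0
    · rw [hq.1, hq.2, hW0]
    · exact (hWpos x' xh' hq).le
  have hbddb : BddBelow (Set.range fun k => W (x k) (xh k)) := by
    refine ⟨0, fun v hv => ?_⟩
    obtain ⟨k, rfl⟩ := hv
    exact hWnonneg _ _
  set L : ℝ := ⨅ k, W (x k) (xh k) with hLdef
  have hWtend : Filter.Tendsto (fun k => W (x k) (xh k)) Filter.atTop (nhds L) :=
    tendsto_atTop_ciInf hanti hbddb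
  have hWtend1 : Filter.Tendsto (fun k => W (x (k + 1)) (xh (k + 1))) Filter.atTop (nhds L) :=
    hWtend.comp (Filter.tendsto_add_atTop_nat 1)
  -- squared output increments tend to zero
  have hsq0 : Filter.Tendsto (fun k => ‖hh (xh (k + 1)) - hh (xh k)‖ ^ 2)
      Filter.atTop (nhds 0) := by
    have hg : Filter.Tendsto (fun k => (W (x k) (xh k) - W (x (k + 1)) (xh (k + 1))) / ε)
        Filter.atTop (nhds 0) := by
      have := (hWtend.sub hWtend1).div_const ε
      simpa using this
    refine squeeze_zero (fun k => sq_nonneg _) (fun k => ?_) hg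
    rw [le_div_iff₀ hε]
    have := hstep k
    nlinarith
  -- trajectory lies in a compact ball
  have hmem : ∀ k, s k ∈ Metric.closedBall
      (0 : EuclideanSpace ℝ (Fin n) × EuclideanSpace ℝ (Fin m)) R := by
    intro k
    rw [Metric.mem_closedBall, dist_zero_right, Prod.norm_def]
    exact max_le (hR k).1 (hR k).2
  -- any limit point along a subsequence has W-value L
  have hWL : ∀ (q : EuclideanSpace ℝ (Fin n) × EuclideanSpace ℝ (Fin m)) (φ : ℕ → ℕ),
      Filter.Tendsto φ Filter.atTop Filter.atTop →
      Filter.Tendsto (fun j => s (φ j)) Filter.atTop (nhds q) → W q.1 q.2 = L := by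
    intro q φ hφ hlim
    have h1 : Filter.Tendsto (fun j => W (x (φ j)) (xh (φ j))) Filter.atTop
        (nhds (W q.1 q.2)) := (hWcont.tendsto q).comp hlim
    have h2 : Filter.Tendsto (fun j => W (x (φ j)) (xh (φ j))) Filter.atTop (nhds L) :=
      hWtend.comp hφ
    exact tendsto_nhds_unique h1 h2
  -- pushing a limit point forward by F
  have hpush : ∀ (q : EuclideanSpace ℝ (Fin n) × EuclideanSpace ℝ (Fin m)) (φ : ℕ → ℕ),
      Filter.Tendsto φ Filter.atTop Filter.atTop →
      Filter.Tendsto (fun j => s (φ j)) Filter.atTop (nhds q) →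
      Filter.Tendsto (fun j => s (φ j + 1)) Filter.atTop (nhds (F q)) ∧
        hh (F q).2 = hh q.2 := by
    intro q φ hφ hlim
    have hlim' : Filter.Tendsto (fun j => s (φ j + 1)) Filter.atTop (nhds (F q)) := by
      have : Filter.Tendsto (fun j => F (s (φ j))) Filter.atTop (nhds (F q)) :=
        (hFcont.tendsto q).comp hlim
      refine this.congr fun j => ?_
      rw [← hsF]
    refine ⟨hlim', ?_⟩
    have ht1 : Filter.Tendsto (fun j => ‖hh (xh (φ j + 1)) - hh (xh (φ j))‖ ^ 2)
        Filter.atTop (nhds 0) := hsq0.comp hφ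
    have htx1 : Filter.Tendsto (fun j => xh (φ j + 1)) Filter.atTop (nhds (F q).2) :=
      (continuous_snd.tendsto (F q)).comp hlim'
    have htx2 : Filter.Tendsto (fun j => xh (φ j)) Filter.atTop (nhds q.2) :=
      (continuous_snd.tendsto q).comp hlim
    have ht2 : Filter.Tendsto (fun j => ‖hh (xh (φ j + 1)) - hh (xh (φ j))‖ ^ 2)
        Filter.atTop (nhds (‖hh (F q).2 - hh q.2‖ ^ 2)) := by
      have := (((hhhcont.tendsto _).comp htx1).sub ((hhhcont.tendsto _).comp htx2)).norm
      exact this.pow 2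
    have : ‖hh (F q).2 - hh q.2‖ ^ 2 = 0 := tendsto_nhds_unique ht2 ht1
    have h0 : hh (F q).2 - hh q.2 = 0 := by
      have := pow_eq_zero_iff (n := 2) (by norm_num) |>.mp this
      exact norm_eq_zero.mp this
    exact sub_eq_zero.mp h0
  -- obtain a limit point of the trajectory
  obtain ⟨q₀, -, φ₀, hφ₀mono, hφ₀lim⟩ :=
    (isCompact_closedBall (0 : EuclideanSpace ℝ (Fin n) × EuclideanSpace ℝ (Fin m)) R).tendsto_subseq
      hmem
  -- its forward orbit consists of limit points
  have horb : ∀ k, ∃ φ : ℕ → ℕ, Filter.Tendsto φ Filter.atTop Filter.atTop ∧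
      Filter.Tendsto (fun j => s (φ j)) Filter.atTop (nhds (F^[k] q₀)) := by
    intro k
    induction k with
    | zero => exact ⟨φ₀, hφ₀mono.tendsto_atTop, hφ₀lim⟩
    | succ k ih =>
      obtain ⟨φ, hφ, hlim⟩ := ih
      refine ⟨fun j => φ j + 1, ?_, ?_⟩
      · exact (Filter.tendsto_add_atTop_nat 1).comp hφ
      · rw [Function.iterate_succ_apply']
        exact (hpush _ φ hφ hlim).1
  have hconst : ∀ k, hh (F^[k + 1] q₀).2 = hh (F^[k] q₀).2 := by
    intro k
    obtain ⟨φ, hφ, hlim⟩ := horb k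
    rw [Function.iterate_succ_apply']
    exact (hpush _ φ hφ hlim).2
  -- apply Assumption
  obtain ⟨K, hK⟩ := hAss (fun k => (F^[k] q₀).1) (fun k => (F^[k] q₀).2)
    (fun k => by simp only [Function.iterate_succ_apply', hFdef])
    (fun k => by simp only [Function.iterate_succ_apply', hFdef])
    hconst
  have hzeroK : F^[K] q₀ = (0, 0) := by
    obtain ⟨h1, h2⟩ := hK K le_rfl
    exact Prod.ext h1 h2
  have hL0 : L = 0 := by
    obtain ⟨φ, hφ, hlim⟩ := horb K
    have := hWL _ φ hφ hlim
    rw [hzeroK] at this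
    simpa [hW0] using this.symm
  -- conclude convergence to the origin
  have hs0 : Filter.Tendsto s Filter.atTop
      (nhds (0 : EuclideanSpace ℝ (Fin n) × EuclideanSpace ℝ (Fin m))) := by
    refine Filter.tendsto_of_subseq_tendsto fun ns hns => ?_
    obtain ⟨q, -, ψ, hψ, hlim⟩ :=
      (isCompact_closedBall (0 : EuclideanSpace ℝ (Fin n) × EuclideanSpace ℝ (Fin m))
        R).tendsto_subseq (x := fun j => s (ns j)) (fun j => hmem (ns j))
    have hq : W q.1 q.2 = L :=
      hWL q (fun j => ns (ψ j)) (hns.comp hψ.tendsto_atTop) hlim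
    have hq0 : q = 0 := by
      by_contra hne
      have : ¬(q.1 = 0 ∧ q.2 = 0) := by
        intro ⟨h1, h2⟩
        exact hne (Prod.ext h1 h2)
      have := hWpos q.1 q.2 this
      rw [hq, hL0] at this
      exact lt_irrefl 0 this
    exact ⟨ψ, by rw [hq0] at hlim; exact hlim⟩
  constructor
  · have := (continuous_fst.tendsto
      (0 : EuclideanSpace ℝ (Fin n) × EuclideanSpace ℝ (Fin m))).comp hs0
    simpa [hsdef, Function.comp_def] using this
  · have := (continuous_snd.tendsto
      (0 : EuclideanSpace ℝ (Fin n) × EuclideanSpace ℝ (Fin m))).comp hs0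
    simpa [hsdef, Function.comp_def] using this
end

section
/- (Theorem 3, first part) Let A ∈ ℝ^{n×n}, B ∈ ℝ^{n×p}, C ∈ ℝ^{p×n}, and let P ∈ ℝ^{n×n} be symmetric positive definite. The linear discrete-time system x_{k+1} = Ax_k + Bu_k, y_k = Cx_k is NI with quadratic storage function V(x) = ½ xᵀPx — that is, the inequality ½ (Ax + Bu)ᵀ P (Ax + Bu) − ½ xᵀPx ≤ uᵀ (C(Ax + Bu) − Cx) holds for all x ∈ ℝ^n and u ∈ ℝ^p — if and only if the matrix M is positive semidefinite. -/
open Matrix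

lemma dot_t {m k : ℕ} (X : Matrix (Fin k) (Fin m) ℝ) (v : Fin m → ℝ) (w : Fin k → ℝ) :
    v ⬝ᵥ (Xᵀ *ᵥ w) = w ⬝ᵥ (X *ᵥ v) := by
  rw [dotProduct_mulVec, vecMul_transpose, dotProduct_comm]

lemma key_identity (n p : ℕ)
    (A : Matrix (Fin n) (Fin n) ℝ) (B : Matrix (Fin n) (Fin p) ℝ)
    (C : Matrix (Fin p) (Fin n) ℝ) (P : Matrix (Fin n) (Fin n) ℝ)
    (hPs : Pᵀ = P) (x : Fin n → ℝ) (u : Fin p → ℝ) :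
    (x ⊕ᵥ u) ⬝ᵥ ((Matrix.fromBlocks
      (P - Aᵀ * P * A) ((Aᵀ - 1) * Cᵀ - Aᵀ * P * B)
      (C * (A - 1) - Bᵀ * P * A) (C * B + Bᵀ * Cᵀ - Bᵀ * P * B)) *ᵥ (x ⊕ᵥ u))
    = 2 * (u ⬝ᵥ (C *ᵥ (A *ᵥ x + B *ᵥ u) - C *ᵥ x)
        - ((1 / 2 : ℝ) * ((A *ᵥ x + B *ᵥ u) ⬝ᵥ (P *ᵥ (A *ᵥ x + B *ᵥ u)))
          - (1 / 2 : ℝ) * (x ⬝ᵥ (P *ᵥ x)))) := by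
  have hsymm : ∀ (v w : Fin n → ℝ), v ⬝ᵥ (P *ᵥ w) = w ⬝ᵥ (P *ᵥ v) := by
    intro v w; conv_lhs => rw [← hPs]
    exact dot_t P v w
  simp only [fromBlocks_mulVec, Sum.elim_comp_inl, Sum.elim_comp_inr,
    sumElim_dotProduct_sumElim, Matrix.sub_mulVec, Matrix.add_mulVec,
    Matrix.mulVec_add, Matrix.mulVec_sub, dotProduct_add, dotProduct_sub,
    add_dotProduct, sub_dotProduct, ← Matrix.mulVec_mulVec, Matrix.one_mulVec,
    dot_t]
  have h1 : (P *ᵥ (A *ᵥ x)) ⬝ᵥ (A *ᵥ x) = (A *ᵥ x) ⬝ᵥ (P *ᵥ (A *ᵥ x)) := dotProduct_comm _ _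
  have hca : (Cᵀ *ᵥ u) ⬝ᵥ (A *ᵥ x) = u ⬝ᵥ (C *ᵥ (A *ᵥ x)) := by rw [dotProduct_comm, dot_t]
  have hcb : (Cᵀ *ᵥ u) ⬝ᵥ (B *ᵥ u) = u ⬝ᵥ (C *ᵥ (B *ᵥ u)) := by rw [dotProduct_comm, dot_t]
  have hb1 : (B *ᵥ u) ⬝ᵥ (P *ᵥ (A *ᵥ x)) = (P *ᵥ (B *ᵥ u)) ⬝ᵥ (A *ᵥ x) := by
    rw [hsymm, dotProduct_comm]
  have hb2 : (A *ᵥ x) ⬝ᵥ (P *ᵥ (B *ᵥ u)) = (P *ᵥ (A *ᵥ x)) ⬝ᵥ (B *ᵥ u) := by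
    rw [hsymm, dotProduct_comm]
  have h6 : (P *ᵥ (B *ᵥ u)) ⬝ᵥ (B *ᵥ u) = (B *ᵥ u) ⬝ᵥ (P *ᵥ (B *ᵥ u)) := dotProduct_comm _ _
  linear_combination -h1 + hca + hb1 + hb2 + hcb - h6

/-- Theorem 3 (first part): the linear discrete-time system `x⁺ = Ax + Bu`, `y = Cx`
is NI with quadratic storage function `V(x) = ½ xᵀPx` (with `P` symmetric positive
definite) if and only if the block matrix `M` is positive semidefinite. -/
theorem linear_NI_iff_M_psd
    (n p : ℕ)
    (A : Matrix (Fin n) (Fin n) ℝ) (B : Matrix (Fin n) (Fin p) ℝ)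
    (C : Matrix (Fin p) (Fin n) ℝ) (P : Matrix (Fin n) (Fin n) ℝ)
    (hP : P.PosDef)
    (M : Matrix (Fin n ⊕ Fin p) (Fin n ⊕ Fin p) ℝ)
    (hM : M = Matrix.fromBlocks
      (P - Aᵀ * P * A) ((Aᵀ - 1) * Cᵀ - Aᵀ * P * B)
      (C * (A - 1) - Bᵀ * P * A) (C * B + Bᵀ * Cᵀ - Bᵀ * P * B)) :
    (∀ (x : Fin n → ℝ) (u : Fin p → ℝ),
      (1 / 2 : ℝ) * ((A *ᵥ x + B *ᵥ u) ⬝ᵥ (P *ᵥ (A *ᵥ x + B *ᵥ u)))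
        - (1 / 2 : ℝ) * (x ⬝ᵥ (P *ᵥ x))
        ≤ u ⬝ᵥ (C *ᵥ (A *ᵥ x + B *ᵥ u) - C *ᵥ x))
    ↔ M.PosSemidef := by
  have hPs : Pᵀ = P := hP.isHermitian.eq
  have hHerm : M.IsHermitian := by
    rw [hM]
    show _ᴴ = _
    rw [conjTranspose_eq_transpose_of_trivial, fromBlocks_transpose]
    simp only [transpose_sub, transpose_add, transpose_mul, transpose_transpose,
      transpose_one, hPs, Matrix.mul_assoc, add_comm]
  constructor
  · intro h
    refine posSemidef_iff_dotProduct_mulVec.mpr ⟨hHerm, fun z => ?_⟩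
    have hz : (z ∘ Sum.inl) ⊕ᵥ (z ∘ Sum.inr) = z := Sum.elim_comp_inl_inr z
    have := key_identity n p A B C P hPs (z ∘ Sum.inl) (z ∘ Sum.inr)
    rw [hz] at this
    have h2 := h (z ∘ Sum.inl) (z ∘ Sum.inr)
    rw [hM]
    simp only [star_trivial]
    rw [this]
    linarith
  · intro h x u
    have h2 := (posSemidef_iff_dotProduct_mulVec.mp h).2 (x ⊕ᵥ u)
    rw [hM] at h2
    simp only [star_trivial] at h2
    rw [key_identity n p A B C P hPs x u] at h2
    linarith
end

section
/- (Theorem 3, second part) Let A ∈ ℝ^{n×n}, B ∈ ℝ^{n×p}, C ∈ ℝ^{p×n}, let P ∈ ℝ^{n×n} be symmetric, and suppose I − A is invertible (det(I − A) ≠ 0). Then the matrix M is positive semidefinite if and only if both of the following hold: (i) C = Bᵀ ((I − A)⁻¹)ᵀ P, and (ii) P − AᵀPA is positive semidefinite. -/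
open Matrix

/-- Auxiliary: a block diagonal matrix `fromBlocks D 0 0 0` with `D` PSD is PSD. -/
lemma fromBlocks_psd_aux {n p : ℕ} {D : Matrix (Fin n) (Fin n) ℝ} (hD : D.PosSemidef) :
    (Matrix.fromBlocks D 0 0 (0 : Matrix (Fin p) (Fin p) ℝ)).PosSemidef := by
  have hDt : Dᵀ = D := by
    exact (Matrix.conjTranspose_eq_transpose_of_trivial D).symm.trans hD.1
  refine Matrix.PosSemidef.of_dotProduct_mulVec_nonneg ?_ ?_
  · rw [Matrix.IsHermitian, Matrix.conjTranspose_eq_transpose_of_trivial,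
      Matrix.fromBlocks_transpose, hDt]
    simp
  · intro x
    have hx : x = Sum.elim (x ∘ Sum.inl) (x ∘ Sum.inr) := by
      ext (i | i) <;> rfl
    rw [hx]
    simp only [Function.star_sumElim, Matrix.fromBlocks_mulVec, Matrix.zero_mulVec,
      Matrix.mulVec_zero, add_zero, zero_add, sumElim_dotProduct_sumElim,
      dotProduct_zero]
    simpa using hD.dotProduct_mulVec_nonneg (x ∘ Sum.inl)

/-- Theorem 3 (second part): when `I − A` is invertible, `M ≥ 0` holds if and only if
`C = Bᵀ (I − A)⁻ᵀ P` and `P − AᵀPA ≥ 0`. -/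
theorem M_psd_iff_C_eq_and_lyapunov
    (n p : ℕ)
    (A : Matrix (Fin n) (Fin n) ℝ) (B : Matrix (Fin n) (Fin p) ℝ)
    (C : Matrix (Fin p) (Fin n) ℝ) (P : Matrix (Fin n) (Fin n) ℝ)
    (hP : P.IsSymm)
    (hA : ((1 : Matrix (Fin n) (Fin n) ℝ) - A).det ≠ 0)
    (M : Matrix (Fin n ⊕ Fin p) (Fin n ⊕ Fin p) ℝ)
    (hM : M = Matrix.fromBlocks
      (P - Aᵀ * P * A) ((Aᵀ - 1) * Cᵀ - Aᵀ * P * B)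
      (C * (A - 1) - Bᵀ * P * A) (C * B + Bᵀ * Cᵀ - Bᵀ * P * B)) :
    M.PosSemidef ↔ (C = Bᵀ * ((1 - A)⁻¹)ᵀ * P ∧ (P - Aᵀ * P * A).PosSemidef) := by
  have hPt : Pᵀ = P := hP
  set J : Matrix (Fin n) (Fin n) ℝ := 1 - A with hJdef
  have hJ : IsUnit J.det := isUnit_iff_ne_zero.mpr hA
  have hJi : J * J⁻¹ = 1 := Matrix.mul_nonsing_inv _ hJ
  have hiJ : J⁻¹ * J = 1 := Matrix.nonsing_inv_mul _ hJ
  set Z : Matrix (Fin n) (Fin p) ℝ := J⁻¹ * B with hZdef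
  have hJZ : J * Z = B := by
    rw [hZdef, ← Matrix.mul_assoc, hJi, Matrix.one_mul]
  have hA1Z : (A - 1) * Z = -B := by
    have hAJ : A - 1 = -J := by rw [hJdef]; abel
    rw [hAJ, Matrix.neg_mul, hJZ]
  have hAZ : A * Z = Z - B := by
    have h := hA1Z
    rw [Matrix.sub_mul, Matrix.one_mul, sub_eq_iff_eq_add] at h
    rw [h]; abel
  set W : Matrix (Fin n) (Fin p) ℝ := P * Z - Cᵀ with hWdef
  set D : Matrix (Fin n) (Fin n) ℝ := P - Aᵀ * P * A with hDdef
  set S : Matrix (Fin n ⊕ Fin p) (Fin n ⊕ Fin p) ℝ := Matrix.fromBlocks 1 Z 0 1 with hSdef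
  set S' : Matrix (Fin n ⊕ Fin p) (Fin n ⊕ Fin p) ℝ := Matrix.fromBlocks 1 (-Z) 0 1 with hS'def
  have hSS' : S * S' = 1 := by
    rw [hSdef, hS'def, Matrix.fromBlocks_multiply]
    simp [Matrix.fromBlocks_one]
  -- the key congruence computation
  have g12 : D * Z + ((Aᵀ - 1) * Cᵀ - Aᵀ * P * B) = Jᵀ * W := by
    rw [hDdef, hWdef, hJdef]
    simp only [Matrix.sub_mul, Matrix.mul_sub, Matrix.transpose_sub, Matrix.transpose_one,
      Matrix.one_mul, Matrix.mul_one, Matrix.mul_assoc]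
    rw [hAZ]
    simp only [Matrix.mul_sub]
    abel
  have hZA : Zᵀ * Aᵀ = Zᵀ - Bᵀ := by
    rw [← Matrix.transpose_mul, hAZ, Matrix.transpose_sub]
  have g21 : Zᵀ * D + (C * (A - 1) - Bᵀ * P * A) = Wᵀ * J := by
    rw [hDdef, hWdef, hJdef]
    simp only [Matrix.sub_mul, Matrix.mul_sub, Matrix.transpose_sub, Matrix.transpose_mul,
      Matrix.transpose_transpose, Matrix.transpose_one, hPt, Matrix.mul_one, Matrix.one_mul,
      ← Matrix.mul_assoc]
    rw [hZA]
    simp only [Matrix.sub_mul]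
    abel
  have g22aux : (C * (A - 1) - Bᵀ * P * A) * Z + (C * B + Bᵀ * Cᵀ - Bᵀ * P * B) = -(Bᵀ * W) := by
    rw [hWdef]
    simp only [Matrix.sub_mul, Matrix.mul_sub, Matrix.add_mul, Matrix.mul_add,
      Matrix.mul_assoc, Matrix.one_mul, Matrix.mul_one, Matrix.neg_mul, Matrix.mul_neg]
    rw [hAZ]
    simp only [Matrix.mul_sub]
    abel
  have hN : Sᵀ * M * S = Matrix.fromBlocks D (Jᵀ * W) (Wᵀ * J) 0 := by
    rw [hM, hSdef, Matrix.fromBlocks_transpose, Matrix.transpose_one, Matrix.transpose_zero,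
      Matrix.fromBlocks_multiply, Matrix.fromBlocks_multiply]
    refine Matrix.fromBlocks_inj.mpr ⟨?_, ?_, ?_, ?_⟩
    · simp
    · simpa using g12
    · simpa using g21
    · have e1 : Zᵀ * (D * Z + ((Aᵀ - 1) * Cᵀ - Aᵀ * P * B)) = Bᵀ * W := by
        rw [g12, ← Matrix.mul_assoc, ← Matrix.transpose_mul, hJZ]
      have key : Zᵀ * (D * Z + ((Aᵀ - 1) * Cᵀ - Aᵀ * P * B))
          + ((C * (A - 1) - Bᵀ * P * A) * Z + (C * B + Bᵀ * Cᵀ - Bᵀ * P * B)) = 0 := by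
        rw [e1, g22aux]; abel
      simp only [Matrix.one_mul, Matrix.mul_one, Matrix.zero_mul, Matrix.mul_zero,
        add_zero, zero_add, Matrix.transpose_one, Matrix.add_mul, Matrix.mul_add, Matrix.mul_assoc] at key ⊢
      abel_nf at key ⊢
      exact key
  have hCT : ∀ T : Matrix (Fin n ⊕ Fin p) (Fin n ⊕ Fin p) ℝ, Tᴴ = Tᵀ := fun T =>
    Matrix.conjTranspose_eq_transpose_of_trivial T
  constructor
  · intro hMpsd
    have hNpsd : (Matrix.fromBlocks D (Jᵀ * W) (Wᵀ * J) 0).PosSemidef := by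
      rw [← hN]
      have := hMpsd.conjTranspose_mul_mul_same S
      rwa [hCT] at this
    have hW : W = 0 := by
      have key : ∀ u : Fin p → ℝ, (Jᵀ * W) *ᵥ u = 0 := by
        intro u
        have h0 : star (Sum.elim (0 : Fin n → ℝ) u) ⬝ᵥ
            (Matrix.fromBlocks D (Jᵀ * W) (Wᵀ * J) 0 *ᵥ Sum.elim (0 : Fin n → ℝ) u) = 0 := by
          simp [Matrix.fromBlocks_mulVec, Function.star_sumElim,
            sumElim_dotProduct_sumElim]
        have hv := (hNpsd.dotProduct_mulVec_zero_iff (Sum.elim (0 : Fin n → ℝ) u)).mp h0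
        funext i
        have h3 := congrFun hv (Sum.inl i)
        simpa [Matrix.fromBlocks_mulVec] using h3
      have hJW : Jᵀ * W = 0 := by
        ext i j
        have := congrFun (key (Pi.single j 1)) i
        simpa [Matrix.mulVec_single] using this
      have hcan : (Jᵀ)⁻¹ * (Jᵀ * W) = W := by
        rw [← Matrix.mul_assoc,
          Matrix.nonsing_inv_mul _ (by rwa [Matrix.det_transpose]), Matrix.one_mul]
      rw [← hcan, hJW, Matrix.mul_zero]
    constructor
    · have hCt : Cᵀ = P * Z := by
        have h := hW
        rw [hWdef, sub_eq_zero] at h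
        exact h.symm
      have h2 := congrArg Matrix.transpose hCt
      simp only [Matrix.transpose_transpose, Matrix.transpose_mul, hPt] at h2
      rw [h2, hZdef, Matrix.transpose_mul]
    · have hsub := hNpsd.submatrix (Sum.inl : Fin n → Fin n ⊕ Fin p)
      have heq : (Matrix.fromBlocks D (Jᵀ * W) (Wᵀ * J) (0 : Matrix (Fin p) (Fin p) ℝ)).submatrix
          (Sum.inl : Fin n → Fin n ⊕ Fin p) Sum.inl = D := by
        ext i j
        simp [Matrix.submatrix_apply]
      rwa [heq] at hsub
  · rintro ⟨hC, hDpsd⟩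
    have hW : W = 0 := by
      rw [hWdef, hC, hZdef]
      simp only [Matrix.transpose_mul, Matrix.transpose_transpose, hPt]
      exact sub_self _
    have hNpsd : (Sᵀ * M * S).PosSemidef := by
      rw [hN, hW]
      simp only [Matrix.mul_zero, Matrix.zero_mul, Matrix.transpose_zero]
      exact fromBlocks_psd_aux hDpsd
    have hM' : M = S'ᵀ * (Sᵀ * M * S) * S' := by
      calc M = 1 * M * 1 := by rw [Matrix.one_mul, Matrix.mul_one]
        _ = (S * S')ᵀ * M * (S * S') := by rw [hSS', Matrix.transpose_one]
        _ = S'ᵀ * (Sᵀ * M * S) * S' := by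
            rw [Matrix.transpose_mul]
            simp only [Matrix.mul_assoc]
    rw [hM']
    have := hNpsd.conjTranspose_mul_mul_same S'
    rwa [hCT] at this
end

section
/- Let A ∈ ℝ^{n×n}, B ∈ ℝ^{n×p}, C ∈ ℝ^{p×n}, let P ∈ ℝ^{n×n} be symmetric, suppose I − A is invertible, and suppose M is positive semidefinite. Then M F = 0, where F ∈ ℝ^{(n+p)×p} is the block column matrix F = [(I − A)⁻¹ B; I]. -/
open Matrix

set_option maxHeartbeats 1000000

/-- If `I − A` is invertible and `M` is positive semidefinite, then `M F = 0` where
`F = [(I − A)⁻¹ B; I]`. -/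
theorem M_psd_annihilates_F
    (n p : ℕ)
    (A : Matrix (Fin n) (Fin n) ℝ) (B : Matrix (Fin n) (Fin p) ℝ)
    (C : Matrix (Fin p) (Fin n) ℝ) (P : Matrix (Fin n) (Fin n) ℝ)
    (hP : P.IsSymm)
    (hA : ((1 : Matrix (Fin n) (Fin n) ℝ) - A).det ≠ 0)
    (M : Matrix (Fin n ⊕ Fin p) (Fin n ⊕ Fin p) ℝ)
    (hM : M = Matrix.fromBlocks
      (P - Aᵀ * P * A) ((Aᵀ - 1) * Cᵀ - Aᵀ * P * B)
      (C * (A - 1) - Bᵀ * P * A) (C * B + Bᵀ * Cᵀ - Bᵀ * P * B))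
    (hMpsd : M.PosSemidef)
    (F : Matrix (Fin n ⊕ Fin p) (Fin p) ℝ)
    (hF : F = Matrix.fromRows ((1 - A)⁻¹ * B) (1 : Matrix (Fin p) (Fin p) ℝ)) :
    M * F = 0 := by
  have hU : IsUnit ((1 : Matrix (Fin n) (Fin n) ℝ) - A).det := isUnit_iff_ne_zero.mpr hA
  set X : Matrix (Fin n) (Fin p) ℝ := (1 - A)⁻¹ * B with hXdef
  have hB : B = X - A * X := by
    have h := Matrix.mul_nonsing_inv_cancel_left (1 - A) B hU
    calc B = (1 - A) * ((1 - A)⁻¹ * B) := h.symm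
    _ = X - A * X := by rw [← hXdef, Matrix.sub_mul, Matrix.one_mul]
  clear_value X
  clear hXdef hU hA
  have key : Fᵀ * (M * F) = 0 := by
    rw [hM, hF, Matrix.fromBlocks_mul_fromRows, Matrix.transpose_fromRows,
      Matrix.fromCols_mul_fromRows]
    rw [hB]
    simp only [Matrix.transpose_sub, Matrix.transpose_mul, Matrix.transpose_one,
      Matrix.sub_mul, Matrix.mul_sub, Matrix.add_mul, Matrix.mul_add, Matrix.mul_one,
      Matrix.one_mul, Matrix.mul_assoc]
    abel
  obtain ⟨R, hR⟩ : ∃ R : Matrix (Fin n ⊕ Fin p) (Fin n ⊕ Fin p) ℝ, M = Rᴴ * R := by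
    open scoped MatrixOrder in
    exact CStarAlgebra.nonneg_iff_eq_star_mul_self.mp hMpsd.nonneg
  have h2 : (R * F)ᴴ * (R * F) = 0 := by
    rw [hR] at key
    calc (R * F)ᴴ * (R * F) = Fᵀ * (Rᴴ * R * F) := by
          simp [Matrix.conjTranspose_mul, Matrix.mul_assoc]
    _ = 0 := key
  have hRF : R * F = 0 := Matrix.conjTranspose_mul_self_eq_zero.mp h2
  rw [hR, Matrix.mul_assoc, hRF, Matrix.mul_zero]
end

section
/- Let A ∈ ℝ^{n×n}, B ∈ ℝ^{n×p}, C ∈ ℝ^{p×n}, let P ∈ ℝ^{n×n} be symmetric, suppose I − A is invertible, and suppose C = Bᵀ ((I − A)⁻¹)ᵀ P. Then the matrix M admits the factorization M = Gᵀ (P − AᵀPA) G, where G ∈ ℝ^{n×(n+p)} is the block row matrix G = [−I, (I − A)⁻¹ B]. In particular, if in addition P − AᵀPA is positive semidefinite, then M is positive semidefinite. -/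
open Matrix

/-- If `I − A` is invertible and `C = Bᵀ (I − A)⁻ᵀ P`, then `M = Gᵀ (P − AᵀPA) G`
with `G = [−I, (I − A)⁻¹ B]`; in particular, `P − AᵀPA ≥ 0` implies `M ≥ 0`. -/
theorem M_factorization
    (n p : ℕ)
    (A : Matrix (Fin n) (Fin n) ℝ) (B : Matrix (Fin n) (Fin p) ℝ)
    (C : Matrix (Fin p) (Fin n) ℝ) (P : Matrix (Fin n) (Fin n) ℝ)
    (hP : P.IsSymm)
    (hA : ((1 : Matrix (Fin n) (Fin n) ℝ) - A).det ≠ 0)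
    (hC : C = Bᵀ * ((1 - A)⁻¹)ᵀ * P)
    (M : Matrix (Fin n ⊕ Fin p) (Fin n ⊕ Fin p) ℝ)
    (hM : M = Matrix.fromBlocks
      (P - Aᵀ * P * A) ((Aᵀ - 1) * Cᵀ - Aᵀ * P * B)
      (C * (A - 1) - Bᵀ * P * A) (C * B + Bᵀ * Cᵀ - Bᵀ * P * B))
    (G : Matrix (Fin n) (Fin n ⊕ Fin p) ℝ)
    (hG : G = Matrix.fromCols (-1 : Matrix (Fin n) (Fin n) ℝ) ((1 - A)⁻¹ * B)) :
    M = Gᵀ * (P - Aᵀ * P * A) * G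
    ∧ ((P - Aᵀ * P * A).PosSemidef → M.PosSemidef) := by
  have hP' : Pᵀ = P := hP
  set Q := ((1 : Matrix (Fin n) (Fin n) ℝ) - A)⁻¹ with hQdef
  have hU : IsUnit ((1 : Matrix (Fin n) (Fin n) ℝ) - A).det := isUnit_iff_ne_zero.mpr hA
  have h1 : ((1 : Matrix (Fin n) (Fin n) ℝ) - A) * Q = 1 := Matrix.mul_nonsing_inv _ hU
  have hAQ : A * Q = Q - 1 := by
    rw [Matrix.sub_mul, Matrix.one_mul] at h1
    have h1' : Q = 1 + A * Q := sub_eq_iff_eq_add.mp h1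
    refine eq_sub_of_add_eq ?_
    rw [add_comm]; exact h1'.symm
  have hAQl : ∀ {m : Type} (X : Matrix (Fin n) m ℝ), A * (Q * X) = Q * X - X := by
    intro m X
    rw [← Matrix.mul_assoc, hAQ, Matrix.sub_mul, Matrix.one_mul]
  have hQAt : ∀ {m : Type} (X : Matrix (Fin n) m ℝ), Qᵀ * (Aᵀ * X) = Qᵀ * X - X := by
    intro m X
    rw [← Matrix.mul_assoc, ← Matrix.transpose_mul, hAQ, Matrix.transpose_sub,
      Matrix.transpose_one, Matrix.sub_mul, Matrix.one_mul]
  have key : M = Gᵀ * (P - Aᵀ * P * A) * G := by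
    subst hC hM hG
    rw [Matrix.transpose_fromCols, Matrix.fromRows_mul, Matrix.fromRows_mul_fromCols]
    refine Matrix.fromBlocks_inj.mpr ⟨?_, ?_, ?_, ?_⟩ <;>
    · simp only [Matrix.transpose_mul, Matrix.transpose_sub, Matrix.transpose_neg,
        Matrix.transpose_one, Matrix.transpose_transpose, hP', Matrix.neg_mul, Matrix.mul_neg,
        Matrix.one_mul, Matrix.mul_one, Matrix.sub_mul, Matrix.mul_sub, Matrix.add_mul,
        Matrix.mul_assoc, hAQl, hQAt]
      try abel
  refine ⟨key, fun hpsd => ?_⟩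
  rw [key]
  have h := hpsd.conjTranspose_mul_mul_same G
  simpa using h
end

section
/- Let A ∈ ℂ^{n×n}, B ∈ ℂ^{n×p}, C ∈ ℂ^{p×n}, let z₀ ∈ ℂ with z₀ ≠ 0, and suppose that (z − z₀) G(z) converges to a matrix R as z → z₀ along the punctured neighborhood of z₀ restricted to points z for which zI − A is invertible. Then (1/z₀)(z − z₀) Ǧ(z) converges to (1 + 1/z₀) R along the same filter; that is, the normalized residue of Ǧ at z₀ equals (1 + 1/z₀) times the residue of G at z₀. -/
open Matrix Filter Topology

/-- Residue transformation: if `(z − z₀) G(z) → R` as `z → z₀` (through points where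
`zI − A` is invertible), then the normalized residue of `Ǧ` at `z₀ ≠ 0` is
`(1 + 1/z₀) R`, i.e. `(1/z₀)(z − z₀) Ǧ(z) → (1 + 1/z₀) R` along the same filter. -/
theorem normalized_residue_transformation
    (n p : ℕ)
    (A : Matrix (Fin n) (Fin n) ℂ) (B : Matrix (Fin n) (Fin p) ℂ)
    (C : Matrix (Fin p) (Fin n) ℂ)
    (G Gc : ℂ → Matrix (Fin p) (Fin p) ℂ)
    (hG : ∀ z : ℂ, G z = C * (z • (1 : Matrix (Fin n) (Fin n) ℂ) - A)⁻¹ * B)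
    (hGc : ∀ z : ℂ, Gc z = C * (A + 1) * (z • (1 : Matrix (Fin n) (Fin n) ℂ) - A)⁻¹ * B)
    (z₀ : ℂ) (hz₀ : z₀ ≠ 0)
    (R : Matrix (Fin p) (Fin p) ℂ)
    (l : Filter ℂ)
    (hl : l = 𝓝[≠] z₀ ⊓ Filter.principal {z : ℂ | IsUnit (z • (1 : Matrix (Fin n) (Fin n) ℂ) - A)})
    (hR : Filter.Tendsto (fun z : ℂ => (z - z₀) • G z) l (𝓝 R)) :
    Filter.Tendsto (fun z : ℂ => (1 / z₀) • ((z - z₀) • Gc z)) l (𝓝 ((1 + 1 / z₀) • R)) := by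
  -- identity: for z with zI - A invertible, Gc z = (z+1) • G z - C*B
  have key : ∀ z : ℂ, IsUnit (z • (1 : Matrix (Fin n) (Fin n) ℂ) - A) →
      Gc z = (z + 1) • G z - C * B := by
    intro z hz
    have hinv : (z • (1 : Matrix (Fin n) (Fin n) ℂ) - A) *
        (z • (1 : Matrix (Fin n) (Fin n) ℂ) - A)⁻¹ = 1 := by
      exact mul_nonsing_inv _ ((Matrix.isUnit_iff_isUnit_det _).mp hz)
    have hA1 : (A + 1) = (z + 1) • (1 : Matrix (Fin n) (Fin n) ℂ)
        - (z • (1 : Matrix (Fin n) (Fin n) ℂ) - A) := by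
      rw [add_smul, one_smul]; abel
    rw [hGc, hG, hA1]
    rw [Matrix.mul_sub, Matrix.sub_mul, Matrix.sub_mul,
      Matrix.mul_smul, Matrix.mul_one, Matrix.smul_mul, Matrix.smul_mul,
      Matrix.mul_assoc C (z • (1 : Matrix (Fin n) (Fin n) ℂ) - A)
        (z • (1 : Matrix (Fin n) (Fin n) ℂ) - A)⁻¹, hinv, Matrix.mul_one]
  -- eventual equality along l
  have hev : ∀ᶠ z in l, (1 / z₀) • ((z - z₀) • Gc z)
      = ((z + 1) / z₀) • ((z - z₀) • G z) - ((z - z₀) / z₀) • (C * B) := by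
    rw [hl]
    filter_upwards [inf_le_right (a := 𝓝[≠] z₀)
      (b := Filter.principal {z : ℂ | IsUnit (z • (1 : Matrix (Fin n) (Fin n) ℂ) - A)})
      (Filter.mem_principal_self _)] with z hz
    rw [key z hz, smul_sub, smul_sub, smul_smul, smul_smul, smul_smul, smul_smul]
    ring_nf
  rw [Filter.tendsto_congr' hev]
  have hzl : Tendsto (fun z : ℂ => z) l (𝓝 z₀) := by
    rw [hl]
    exact tendsto_id.mono_left (inf_le_left.trans nhdsWithin_le_nhds)
  have h1 : Tendsto (fun z : ℂ => ((z + 1) / z₀) • ((z - z₀) • G z)) l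
      (𝓝 (((z₀ + 1) / z₀) • R)) :=
    Tendsto.smul (by exact ((hzl.add_const 1).div_const z₀)) hR
  have h2 : Tendsto (fun z : ℂ => ((z - z₀) / z₀) • (C * B)) l (𝓝 (0 : Matrix (Fin p) (Fin p) ℂ)) := by
    have : Tendsto (fun z : ℂ => (z - z₀) / z₀) l (𝓝 0) := by
      have := (hzl.sub_const z₀).div_const z₀
      simpa using this
    simpa using this.smul_const (C * B)
  have := h1.sub h2
  rw [sub_zero] at this
  convert this using 2
  field_simp
end

section
/- (Lyapunov matrix positivity in Corollary 1) Let P ∈ ℝ^{n×n} and P̃ ∈ ℝ^{m×m} be symmetric positive definite, and let C₁ ∈ ℝ^{p×n}, Ĉ₂ ∈ ℝ^{p×m}. Suppose every real eigenvalue μ of the p×p matrix C₁ P⁻¹ C₁ᵀ Ĉ₂ P̃⁻¹ Ĉ₂ᵀ satisfies μ < 1 (the DC loop-gain condition λ_max(G(1)H(1)) < 1). Then the (n+m)×(n+m) block matrix [[P, −C₁ᵀ Ĉ₂], [−Ĉ₂ᵀ C₁, P̃]] is positive definite; equivalently, the quadratic form W(x, x̃) = xᵀPx + x̃ᵀP̃x̃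 − 2 xᵀ C₁ᵀ Ĉ₂ x̃ is positive definite. -/
open Matrix

private lemma ctr {k l : ℕ} (M : Matrix (Fin k) (Fin l) ℝ) : Mᴴ = Mᵀ :=
  conjTranspose_eq_transpose_of_trivial M

private lemma star_id {ι : Type*} (v : ι → ℝ) : star v = v :=
  funext fun _ => star_trivial _

private lemma mem_spectrum_of_eigen {k : ℕ} {M : Matrix (Fin k) (Fin k) ℝ} {μ : ℝ}
    {v : Fin k → ℝ} (hv : v ≠ 0) (h : M *ᵥ v = μ • v) : μ ∈ spectrum ℝ M := by
  rw [spectrum.mem_iff]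
  intro hu
  rw [Matrix.isUnit_iff_isUnit_det, isUnit_iff_ne_zero] at hu
  apply hu
  rw [← Matrix.exists_mulVec_eq_zero_iff]
  refine ⟨v, hv, ?_⟩
  rw [Algebra.algebraMap_eq_smul_one, sub_mulVec, smul_mulVec, one_mulVec, h, sub_self]

private lemma eigen_of_mem_spectrum {k : ℕ} {M : Matrix (Fin k) (Fin k) ℝ} {μ : ℝ}
    (h : μ ∈ spectrum ℝ M) : ∃ v, v ≠ 0 ∧ M *ᵥ v = μ • v := by
  rw [spectrum.mem_iff, Matrix.isUnit_iff_isUnit_det, isUnit_iff_ne_zero, not_not,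
    ← Matrix.exists_mulVec_eq_zero_iff] at h
  obtain ⟨v, hv, hMv⟩ := h
  refine ⟨v, hv, ?_⟩
  rw [Algebra.algebraMap_eq_smul_one, sub_mulVec, smul_mulVec, one_mulVec,
    sub_eq_zero] at hMv
  exact hMv.symm

private lemma posdef_conj {k : ℕ} {A : Matrix (Fin k) (Fin k) ℝ} (hA : A.PosDef)
    {B : Matrix (Fin k) (Fin k) ℝ} (hB : IsUnit B) : (B * A * Bᴴ).PosDef := by
  have hBH : IsUnit Bᴴ := by
    rw [ctr, Matrix.isUnit_iff_isUnit_det, det_transpose, ← Matrix.isUnit_iff_isUnit_det]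
    exact hB
  refine PosDef.of_dotProduct_mulVec_pos ?_ ?_
  · have := isHermitian_conjTranspose_mul_mul Bᴴ hA.1
    rwa [conjTranspose_conjTranspose] at this
  · intro x hx
    have hx' : Bᴴ *ᵥ x ≠ 0 := by
      intro h0
      exact hx (Matrix.mulVec_injective_iff_isUnit.mpr hBH (by rw [h0, mulVec_zero]))
    have := hA.dotProduct_mulVec_pos hx'
    simpa only [star_mulVec, conjTranspose_conjTranspose, Matrix.dotProduct_mulVec,
      vecMul_vecMul, ← Matrix.mul_assoc] using this

private lemma quadform_pull {a b : ℕ} (M : Matrix (Fin a) (Fin b) ℝ)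
    (S : Matrix (Fin a) (Fin a) ℝ) (u : Fin b → ℝ) :
    (M *ᵥ u) ⬝ᵥ (S *ᵥ (M *ᵥ u)) = u ⬝ᵥ ((Mᵀ * S * M) *ᵥ u) := by
  calc (M *ᵥ u) ⬝ᵥ (S *ᵥ (M *ᵥ u))
      = ((M *ᵥ u) ᵥ* (S * M)) ⬝ᵥ u := by rw [mulVec_mulVec, Matrix.dotProduct_mulVec]
    _ = ((u ᵥ* Mᵀ) ᵥ* (S * M)) ⬝ᵥ u := by rw [vecMul_transpose]
    _ = u ⬝ᵥ ((Mᵀ * S * M) *ᵥ u) := by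
        rw [vecMul_vecMul, ← Matrix.dotProduct_mulVec, Matrix.mul_assoc]

open scoped MatrixOrder in
private lemma schur_aux {n m p : ℕ}
    (P : Matrix (Fin n) (Fin n) ℝ) (Pt : Matrix (Fin m) (Fin m) ℝ)
    (C₁ : Matrix (Fin p) (Fin n) ℝ) (Ch₂ : Matrix (Fin p) (Fin m) ℝ)
    (hP : P.PosDef) (hPt : Pt.PosDef)
    (hspec : ∀ μ : ℝ, μ ∈ spectrum ℝ (C₁ * P⁻¹ * C₁ᵀ * Ch₂ * Pt⁻¹ * Ch₂ᵀ) → μ < 1)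
    (xt : Fin m → ℝ) (hxt : xt ≠ 0) :
    xt ⬝ᵥ ((Ch₂ᵀ * (C₁ * P⁻¹ * C₁ᵀ) * Ch₂) *ᵥ xt) < xt ⬝ᵥ (Pt *ᵥ xt) := by
  set A := C₁ * P⁻¹ * C₁ᵀ with hAdef
  have hA : A.PosSemidef := by
    have := (hP.inv).posSemidef.mul_mul_conjTranspose_same C₁
    rwa [ctr] at this
  set R := CFC.sqrt Pt with hRdef
  have hR : R.PosSemidef := Matrix.nonneg_iff_posSemidef.mp (CFC.sqrt_nonneg Pt)
  have hRR : R * R = Pt := CFC.sqrt_mul_sqrt_self Pt (Matrix.nonneg_iff_posSemidef.mpr hPt.posSemidef)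
  have hRunit : IsUnit R := by
    rw [Matrix.isUnit_iff_isUnit_det, isUnit_iff_ne_zero]
    intro h0
    have : Pt.det = 0 := by rw [← hRR, det_mul, h0, mul_zero]
    exact hPt.det_pos.ne' this
  have hRdet : IsUnit R.det := (Matrix.isUnit_iff_isUnit_det R).mp hRunit
  have hRiR : R⁻¹ * R = 1 := nonsing_inv_mul R hRdet
  have hPtinv : Pt⁻¹ = R⁻¹ * R⁻¹ := by rw [← hRR, Matrix.mul_inv_rev]
  have hRherm : Rᵀ = R := by rw [← ctr]; exact hR.1
  have hRiherm : (R⁻¹)ᵀ = R⁻¹ := by rw [← ctr]; exact hR.1.inv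
  set K := R⁻¹ * Ch₂ᵀ * A * Ch₂ * R⁻¹ with hKdef
  have hKeq : K = (R⁻¹ * Ch₂ᵀ) * A * (R⁻¹ * Ch₂ᵀ)ᴴ := by
    rw [ctr, transpose_mul, transpose_transpose, hRiherm, hKdef]
    simp only [Matrix.mul_assoc]
  have hK : K.PosSemidef := hKeq ▸ hA.mul_mul_conjTranspose_same _
  have hKlt : ∀ i, hK.1.eigenvalues i < 1 := by
    intro i
    rcases eq_or_ne (hK.1.eigenvalues i) 0 with h0 | h0
    · rw [h0]; norm_num
    · obtain ⟨v, hv, hKv⟩ := eigen_of_mem_spectrum (hK.1.eigenvalues_mem_spectrum_real i)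
      set μ := hK.1.eigenvalues i with hμ
      set w := (A * Ch₂ * R⁻¹) *ᵥ v with hwdef
      have hUVv : (R⁻¹ * Ch₂ᵀ) *ᵥ w = μ • v := by
        rw [hwdef, mulVec_mulVec, ← hKv, hKdef]
        congr 1
        simp only [Matrix.mul_assoc]
      have hw : w ≠ 0 := by
        intro h
        rw [h, mulVec_zero] at hUVv
        exact (smul_ne_zero h0 hv) hUVv.symm
      have hABw : (C₁ * P⁻¹ * C₁ᵀ * Ch₂ * Pt⁻¹ * Ch₂ᵀ) *ᵥ w = μ • w := by
        have h1 : C₁ * P⁻¹ * C₁ᵀ * Ch₂ * Pt⁻¹ * Ch₂ᵀ = (A * Ch₂ * R⁻¹) * (R⁻¹ * Ch₂ᵀ) := by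
          rw [hPtinv, hAdef]
          simp only [Matrix.mul_assoc]
        rw [h1, ← mulVec_mulVec, hUVv, mulVec_smul]
      exact hspec μ (mem_spectrum_of_eigen hw hABw)
  have h1K : (1 - K).PosDef := by
    have hst := by have := hK.1.spectral_theorem; simpa only [Unitary.conjStarAlgAut_apply] using this
    set W : Matrix (Fin m) (Fin m) ℝ := (hK.1.eigenvectorUnitary : Matrix (Fin m) (Fin m) ℝ)
      with hWdef
    have hWW : W * star W = 1 := (Matrix.mem_unitaryGroup_iff).mp hK.1.eigenvectorUnitary.2
    have hWW' : star W * W = 1 := (Matrix.mem_unitaryGroup_iff').mp hK.1.eigenvectorUnitary.2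
    have hWunit : IsUnit W := ⟨⟨W, star W, hWW, hWW'⟩, rfl⟩
    have hdiag : 1 - K =
        W * diagonal (fun i => 1 - hK.1.eigenvalues i) * star W := by
      have hD : diagonal (fun i => (1 : ℝ) - hK.1.eigenvalues i)
          = 1 - diagonal (RCLike.ofReal ∘ hK.1.eigenvalues) := by
        rw [← diagonal_one, diagonal_sub]
        congr 1
      rw [hD, Matrix.mul_sub, Matrix.sub_mul, Matrix.mul_one, hWW, ← hst]
    rw [hdiag, Matrix.star_eq_conjTranspose W]
    exact posdef_conj (Matrix.PosDef.diagonal fun i => by have := hKlt i; linarith) hWunit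
  set N := Ch₂ᵀ * A * Ch₂ with hNdef
  have hy : R *ᵥ xt ≠ 0 := by
    intro h0
    exact hxt (Matrix.mulVec_injective_iff_isUnit.mpr hRunit (by rw [h0, mulVec_zero]))
  have h2 := h1K.dotProduct_mulVec_pos hy
  rw [star_id] at h2
  have e1 : (R *ᵥ xt) ⬝ᵥ (R *ᵥ xt) = xt ⬝ᵥ (Pt *ᵥ xt) := by
    rw [Matrix.dotProduct_mulVec (R *ᵥ xt) R xt, ← Matrix.mulVec_transpose, hRherm,
      mulVec_mulVec, hRR, dotProduct_comm]
  have e2 : (R *ᵥ xt) ⬝ᵥ (K *ᵥ (R *ᵥ xt)) = xt ⬝ᵥ (N *ᵥ xt) := by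
    have hKR : K * R = R⁻¹ * N := by
      rw [hKdef, hNdef]
      simp only [Matrix.mul_assoc, hRiR, Matrix.mul_one]
    rw [mulVec_mulVec, hKR, ← mulVec_mulVec, Matrix.dotProduct_mulVec (R *ᵥ xt) R⁻¹,
      ← Matrix.mulVec_transpose, hRiherm, mulVec_mulVec, hRiR, one_mulVec]
  rw [sub_mulVec, one_mulVec, dotProduct_sub, e1, e2] at h2
  linarith

/-- Lyapunov matrix positivity in Corollary 1: if `P > 0`, `P̃ > 0` and every real
eigenvalue of the DC loop-gain matrix `C₁ P⁻¹ C₁ᵀ Ĉ₂ P̃⁻¹ Ĉ₂ᵀ` is less than `1`,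
then the block matrix `[[P, −C₁ᵀĈ₂], [−Ĉ₂ᵀC₁, P̃]]` is positive definite;
equivalently, the quadratic form `W(x, x̃) = xᵀPx + x̃ᵀP̃x̃ − 2 xᵀC₁ᵀĈ₂x̃` is
positive definite. -/
theorem lyapunov_block_matrix_posdef
    (n m p : ℕ)
    (P : Matrix (Fin n) (Fin n) ℝ) (Pt : Matrix (Fin m) (Fin m) ℝ)
    (C₁ : Matrix (Fin p) (Fin n) ℝ) (Ch₂ : Matrix (Fin p) (Fin m) ℝ)
    (hP : P.PosDef) (hPt : Pt.PosDef)
    (hspec : ∀ μ : ℝ, μ ∈ spectrum ℝ (C₁ * P⁻¹ * C₁ᵀ * Ch₂ * Pt⁻¹ * Ch₂ᵀ) → μ < 1) :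
    (Matrix.fromBlocks P (-(C₁ᵀ * Ch₂)) (-(Ch₂ᵀ * C₁)) Pt).PosDef
    ∧ (∀ (x : Fin n → ℝ) (xt : Fin m → ℝ), ¬(x = 0 ∧ xt = 0) →
        0 < x ⬝ᵥ (P *ᵥ x) + xt ⬝ᵥ (Pt *ᵥ xt) - 2 * (x ⬝ᵥ ((C₁ᵀ * Ch₂) *ᵥ xt))) := by
  have hPdet : IsUnit P.det := (Matrix.isUnit_iff_isUnit_det P).mp hP.isUnit
  have hPherm : Pᵀ = P := by rw [← ctr]; exact hP.1
  have key : ∀ (x : Fin n → ℝ) (xt : Fin m → ℝ), ¬(x = 0 ∧ xt = 0) →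
      0 < x ⬝ᵥ (P *ᵥ x) + xt ⬝ᵥ (Pt *ᵥ xt) - 2 * (x ⬝ᵥ ((C₁ᵀ * Ch₂) *ᵥ xt)) := by
    intro x xt hxxt
    by_cases hxt : xt = 0
    · have hx : x ≠ 0 := fun hx => hxxt ⟨hx, hxt⟩
      have := hP.dotProduct_mulVec_pos hx
      rw [star_id] at this
      simp only [hxt, mulVec_zero, dotProduct_zero, mul_zero, add_zero, sub_zero]
      exact this
    · have hS := schur_aux P Pt C₁ Ch₂ hP hPt hspec xt hxt
      set c := (C₁ᵀ * Ch₂) *ᵥ xt with hcdef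
      set q := P⁻¹ *ᵥ c with hqdef
      have hPq : P *ᵥ q = c := by
        rw [hqdef, mulVec_mulVec, mul_nonsing_inv P hPdet, one_mulVec]
      have hsq : 0 ≤ (x - q) ⬝ᵥ (P *ᵥ (x - q)) := by
        have := hP.posSemidef.dotProduct_mulVec_nonneg (x - q)
        rwa [star_id] at this
      have hqPx : q ⬝ᵥ (P *ᵥ x) = x ⬝ᵥ c := by
        rw [Matrix.dotProduct_mulVec q P x, ← Matrix.mulVec_transpose, hPherm, hPq,
          dotProduct_comm]
      have hqc : c ⬝ᵥ q = xt ⬝ᵥ ((Ch₂ᵀ * (C₁ * P⁻¹ * C₁ᵀ) * Ch₂) *ᵥ xt) := by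
        rw [hqdef, hcdef, quadform_pull]
        congr 2
        rw [transpose_mul, transpose_transpose]
        simp only [Matrix.mul_assoc]
      rw [mulVec_sub, hPq, dotProduct_sub, sub_dotProduct, sub_dotProduct, hqPx] at hsq
      have hqc2 : q ⬝ᵥ c = c ⬝ᵥ q := dotProduct_comm _ _
      rw [hqc] at hqc2
      linarith [hsq, hS, hqc2]
  refine ⟨PosDef.of_dotProduct_mulVec_pos ?_ ?_, key⟩
  · rw [isHermitian_fromBlocks_iff]
    refine ⟨hP.1, ?_, ?_, hPt.1⟩
    · rw [ctr, transpose_neg, transpose_mul, transpose_transpose]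
    · rw [ctr, transpose_neg, transpose_mul, transpose_transpose]
  · intro v hv
    set x := v ∘ Sum.inl with hxdef
    set xt := v ∘ Sum.inr with hxtdef
    have hv' : v = Sum.elim x xt := (Sum.elim_comp_inl_inr v).symm
    have hne : ¬(x = 0 ∧ xt = 0) := by
      rintro ⟨h1, h2⟩
      apply hv
      rw [hv', h1, h2]
      funext i
      cases i <;> rfl
    have hkey := key x xt hne
    have hcross : xt ⬝ᵥ ((Ch₂ᵀ * C₁) *ᵥ x) = x ⬝ᵥ ((C₁ᵀ * Ch₂) *ᵥ xt) := by
      have h : Ch₂ᵀ * C₁ = (C₁ᵀ * Ch₂)ᵀ := by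
        rw [transpose_mul, transpose_transpose]
      rw [h, Matrix.mulVec_transpose, dotProduct_comm, ← Matrix.dotProduct_mulVec]
    rw [star_id, hv', fromBlocks_mulVec]
    simp only [Sum.elim_comp_inl, Sum.elim_comp_inr, sumElim_dotProduct_sumElim,
      dotProduct_add, neg_mulVec, dotProduct_neg]
    rw [hcross] at *
    linarith
end
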